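/- Let α be an n×n hermitian complex matrix and let P₁ and P₂ be orthogonal projection matrices (P² = P = Pᴴ) of ranks p₁ and p₂ respectively, with p = p₁ + p₂ ≤ n. Then Tr(P₁ α) − Tr(P₂ α) ≤ Σ_{i=1}^{p} sᵢ(α), where s₁(α) ≥ s₂(α) ≥ … ≥ sₙ(α) are the singular values of α listed in decreasing order. -/

import Mathlib

open Matrix
open scoped ComplexOrder

noncomputable def traceNorm {ι : Type*} [Fintype ι] [DecidableEq ι]
    (A : Matrix ι ι ℂ) : ℝ :=
  ((((Matrix.posSemidef_conjTranspose_mul_self A).1.eigenvectorUnitary : Matrix ι ι ℂ) *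
      Matrix.diagonal (((↑) : ℝ → ℂ) ∘ (√·) ∘ (Matrix.posSemidef_conjTranspose_mul_self A).1.eigenvalues) *
      (star (Matrix.posSemidef_conjTranspose_mul_self A).1.eigenvectorUnitary : Matrix ι ι ℂ)).trace).re

noncomputable def mfun {ι : Type*} [Fintype ι] [DecidableEq ι] (g : ℝ → ℝ)
    (A : Matrix ι ι ℂ) : Matrix ι ι ℂ :=
  if hA : A.IsHermitian then
    (hA.eigenvectorUnitary : Matrix ι ι ℂ) *
      Matrix.diagonal (fun i => (g (hA.eigenvalues i) : ℂ)) *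
      (star hA.eigenvectorUnitary : Matrix ι ι ℂ)
  else 0

noncomputable def divDiff {ι : Type*} (g : ℝ → ℝ) (a : ι → ℝ) : Matrix ι ι ℝ :=
  Matrix.of fun i j =>
    if a i = a j then deriv g (a i) else (g (a i) - g (a j)) / (a i - a j)

noncomputable def Dop {ι : Type*} [Fintype ι] [DecidableEq ι] (g : ℝ → ℝ)
    {A : Matrix ι ι ℂ} (hA : A.IsHermitian) (B : Matrix ι ι ℂ) : Matrix ι ι ℂ :=
  (hA.eigenvectorUnitary : Matrix ι ι ℂ) *
    (((divDiff g hA.eigenvalues).map Complex.ofReal) ⊙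
      ((star hA.eigenvectorUnitary : Matrix ι ι ℂ) * B *
        (hA.eigenvectorUnitary : Matrix ι ι ℂ))) *
    (star hA.eigenvectorUnitary : Matrix ι ι ℂ)

noncomputable def relEnt {ι : Type*} [Fintype ι] [DecidableEq ι]
    (ρ σ : Matrix ι ι ℂ) : ℝ :=
  ((ρ * (mfun Real.log ρ - mfun Real.log σ)).trace).re

def ptrans {m n : Type*} (A : Matrix (m × n) (m × n) ℂ) : Matrix (m × n) (m × n) ℂ :=
  Matrix.of fun p q => A (p.1, q.2) (q.1, p.2)

/-- The singular values of a hermitian matrix (absolute values of eigenvalues),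
listed in decreasing order. -/
noncomputable def svals {N : ℕ} {α : Matrix (Fin N) (Fin N) ℂ}
    (hα : α.IsHermitian) : Fin N → ℝ :=
  fun i => |hα.eigenvalues (Tuple.sort (fun j => -|hα.eigenvalues j|) i)|

lemma weighted_le_top {N p : ℕ} (hpN : p ≤ N) (s t : Fin N → ℝ)
    (hs0 : ∀ i, 0 ≤ s i) (hanti : ∀ i j : Fin N, i ≤ j → s j ≤ s i)
    (ht0 : ∀ i, 0 ≤ t i) (ht1 : ∀ i, t i ≤ 1) (htp : ∑ i, t i ≤ (p : ℝ)) :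
    ∑ i, t i * s i ≤ ∑ i ∈ Finset.univ.filter (fun i : Fin N => (i : ℕ) < p), s i := by
  rcases Nat.eq_zero_or_pos p with hp0 | hp0
  · subst hp0
    have hz : ∀ i ∈ Finset.univ, t i = 0 := by
      have := (Finset.sum_eq_zero_iff_of_nonneg (fun i _ => ht0 i)).mp
        (le_antisymm (by simpa using htp) (Finset.sum_nonneg fun i _ => ht0 i))
      simpa using this
    have hZ : ∑ i, t i * s i = 0 :=
      Finset.sum_eq_zero fun i _ => by rw [hz i (Finset.mem_univ i), zero_mul]
    rw [hZ]
    simp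
  · set τ : ℝ := s ⟨p - 1, by omega⟩ with hτ
    have hτ0 : 0 ≤ τ := hs0 _
    have hcard : (Finset.univ.filter (fun i : Fin N => (i : ℕ) < p)).card = p := by
      have hb : (Finset.univ.filter (fun i : Fin N => (i : ℕ) < p)).card
          = (Finset.range p).card := by
        refine Finset.card_bij (fun i _ => (i : ℕ)) ?_ ?_ ?_
        · intro a ha; simp only [Finset.mem_filter, Finset.mem_univ, true_and] at ha
          exact Finset.mem_range.mpr ha
        · intro a ha b hbb hab; exact Fin.ext hab
        · intro b hbb
          simp only [Finset.mem_range] at hbb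
          exact ⟨⟨b, by omega⟩, by simp [hbb], rfl⟩
      rw [hb, Finset.card_range]
    have key1 : ∀ i : Fin N, t i * s i ≤ max (s i - τ) 0 + t i * τ := by
      intro i
      rcases le_total τ (s i) with h | h
      · have : max (s i - τ) 0 = s i - τ := max_eq_left (by linarith)
        nlinarith [ht0 i, ht1 i]
      · have : max (s i - τ) 0 = 0 := max_eq_right (by linarith)
        nlinarith [ht0 i, ht1 i]
    have hmax : ∑ i, max (s i - τ) 0
        = ∑ i ∈ Finset.univ.filter (fun i : Fin N => (i : ℕ) < p), (s i - τ) := by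
      rw [← Finset.sum_filter_add_sum_filter_not Finset.univ (fun i : Fin N => (i : ℕ) < p)]
      have h1 : ∀ i ∈ Finset.univ.filter (fun i : Fin N => (i : ℕ) < p),
          max (s i - τ) 0 = s i - τ := by
        intro i hi
        simp only [Finset.mem_filter] at hi
        have : τ ≤ s i := hanti i ⟨p - 1, by omega⟩ (by simp [Fin.le_def]; omega)
        exact max_eq_left (by linarith)
      have h2 : ∀ i ∈ Finset.univ.filter (fun i : Fin N => ¬ (i : ℕ) < p),
          max (s i - τ) 0 = 0 := by
        intro i hi
        simp only [Finset.mem_filter] at hi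
        have : s i ≤ τ := hanti ⟨p - 1, by omega⟩ i (by simp [Fin.le_def]; omega)
        exact max_eq_right (by linarith)
      rw [Finset.sum_congr rfl h1, Finset.sum_congr rfl h2, Finset.sum_const, smul_zero, add_zero]
    calc ∑ i, t i * s i ≤ ∑ i, (max (s i - τ) 0 + t i * τ) :=
          Finset.sum_le_sum fun i _ => key1 i
      _ = ∑ i, max (s i - τ) 0 + (∑ i, t i) * τ := by
          rw [Finset.sum_add_distrib, Finset.sum_mul]
      _ ≤ ∑ i ∈ Finset.univ.filter (fun i : Fin N => (i : ℕ) < p), (s i - τ) + p * τ := by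
          rw [hmax]
          have : (∑ i, t i) * τ ≤ p * τ := mul_le_mul_of_nonneg_right htp hτ0
          linarith
      _ = ∑ i ∈ Finset.univ.filter (fun i : Fin N => (i : ℕ) < p), s i := by
          rw [Finset.sum_sub_distrib, Finset.sum_const, hcard, nsmul_eq_mul]
          ring

lemma proj_eig {N : ℕ} {P : Matrix (Fin N) (Fin N) ℂ} (hP : P.IsHermitian)
    (hproj : P * P = P) (i : Fin N) :
    hP.eigenvalues i = 0 ∨ hP.eigenvalues i = 1 := by
  have hV : (hP.eigenvectorUnitary : Matrix (Fin N) (Fin N) ℂ) *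
      star (hP.eigenvectorUnitary : Matrix (Fin N) (Fin N) ℂ) = 1 :=
    Matrix.mem_unitaryGroup_iff.mp hP.eigenvectorUnitary.2
  have hD := hP.conjStarAlgAut_star_eigenvectorUnitary
  rw [Unitary.conjStarAlgAut_star_apply] at hD
  set V := (hP.eigenvectorUnitary : Matrix (Fin N) (Fin N) ℂ)
  have h2 : (star V * P * V) * (star V * P * V) = star V * P * V := by
    calc (star V * P * V) * (star V * P * V)
        = star V * P * (V * star V) * P * V := by
          simp only [Matrix.mul_assoc]
      _ = star V * (P * P) * V := by rw [hV]; simp only [Matrix.mul_one, Matrix.mul_assoc]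
      _ = star V * P * V := by rw [hproj, Matrix.mul_assoc]
  rw [hD, Matrix.diagonal_mul_diagonal] at h2
  have h3 := congrFun (congrFun h2 i) i
  simp only [Matrix.diagonal_apply_eq, Function.comp_apply, Pi.mul_apply] at h3
  have hre : hP.eigenvalues i * hP.eigenvalues i = hP.eigenvalues i := by
    exact_mod_cast h3
  have : hP.eigenvalues i * (hP.eigenvalues i - 1) = 0 := by ring_nf; nlinarith
  rcases mul_eq_zero.mp this with h | h
  · exact Or.inl h
  · exact Or.inr (by linarith)

lemma proj_trace {N : ℕ} {P : Matrix (Fin N) (Fin N) ℂ} (hP : P.IsHermitian)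
    (hproj : P * P = P) : P.trace = (P.rank : ℂ) := by
  have heig := fun i => proj_eig hP hproj i
  have hV' : star (hP.eigenvectorUnitary : Matrix (Fin N) (Fin N) ℂ) *
      (hP.eigenvectorUnitary : Matrix (Fin N) (Fin N) ℂ) = 1 :=
    Matrix.mem_unitaryGroup_iff'.mp hP.eigenvectorUnitary.2
  have htr : P.trace = ∑ i, (hP.eigenvalues i : ℂ) := by
    conv_lhs => rw [hP.spectral_theorem, Unitary.conjStarAlgAut_apply]
    rw [Matrix.trace_mul_cycle, hV', Matrix.one_mul, Matrix.trace_diagonal]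
    rfl
  rw [htr, hP.rank_eq_card_non_zero_eigs, Fintype.card_subtype]
  rw [← Finset.sum_boole]
  refine Finset.sum_congr rfl fun i _ => ?_
  rcases heig i with h | h <;> simp [h]

lemma diag_proj {N : ℕ} {Q : Matrix (Fin N) (Fin N) ℂ} (hQ : Q.IsHermitian)
    (hproj : Q * Q = Q) (i : Fin N) : 0 ≤ (Q i i).re ∧ (Q i i).re ≤ 1 := by
  have hsum : Q i i = ∑ k, (Complex.normSq (Q i k) : ℂ) := by
    conv_lhs => rw [← hproj]
    rw [Matrix.mul_apply]
    refine Finset.sum_congr rfl fun k _ => ?_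
    have hk : Q k i = star (Q i k) := by
      have := congrFun (congrFun hQ k) i
      rw [Matrix.conjTranspose_apply] at this
      exact this.symm
    rw [hk]
    exact Complex.mul_conj _
  have hre : (Q i i).re = ∑ k, Complex.normSq (Q i k) := by
    rw [hsum]
    simp [Complex.re_sum]
  have h0 : 0 ≤ (Q i i).re := by
    rw [hre]; exact Finset.sum_nonneg fun k _ => Complex.normSq_nonneg _
  have hle : Complex.normSq (Q i i) ≤ ∑ k, Complex.normSq (Q i k) :=
    Finset.single_le_sum (fun k _ => Complex.normSq_nonneg _) (Finset.mem_univ i)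
  have hsq : (Q i i).re ^ 2 ≤ Complex.normSq (Q i i) := by
    rw [Complex.normSq_apply]; nlinarith [sq_nonneg (Q i i).im]
  refine ⟨h0, ?_⟩
  nlinarith [hre, hle, hsq]

lemma trace_mul_herm_re {N : ℕ} (α P : Matrix (Fin N) (Fin N) ℂ) (hα : α.IsHermitian) :
    ((P * α).trace).re = ∑ i, hα.eigenvalues i *
      ((star (hα.eigenvectorUnitary : Matrix (Fin N) (Fin N) ℂ) * P *
        (hα.eigenvectorUnitary : Matrix (Fin N) (Fin N) ℂ)) i i).re := by
  set V := (hα.eigenvectorUnitary : Matrix (Fin N) (Fin N) ℂ)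
  have h1 : (P * α).trace =
      ((star V * P * V) * diagonal (RCLike.ofReal ∘ hα.eigenvalues)).trace := by
    conv_lhs => rw [hα.spectral_theorem, Unitary.conjStarAlgAut_apply]
    rw [show P * (V * diagonal (RCLike.ofReal ∘ hα.eigenvalues) * star V)
        = (P * V * diagonal (RCLike.ofReal ∘ hα.eigenvalues)) * star V by
      simp only [Matrix.mul_assoc]]
    rw [Matrix.trace_mul_comm]
    simp only [Matrix.mul_assoc]
  rw [h1, Matrix.trace, Complex.re_sum]
  refine Finset.sum_congr rfl fun i _ => ?_
  rw [Matrix.diag_apply, Matrix.mul_diagonal]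
  simp [Complex.mul_re, mul_comm]


theorem trace_proj_sub_trace_proj_le_sum_singular_values
    {N : ℕ} (α P₁ P₂ : Matrix (Fin N) (Fin N) ℂ) (hα : α.IsHermitian)
    (hP₁proj : P₁ * P₁ = P₁) (hP₁herm : P₁.IsHermitian)
    (hP₂proj : P₂ * P₂ = P₂) (hP₂herm : P₂.IsHermitian)
    (p₁ p₂ p : ℕ) (hp₁ : P₁.rank = p₁) (hp₂ : P₂.rank = p₂)
    (hp : p = p₁ + p₂) (hpN : p ≤ N) :
    ((P₁ * α).trace).re - ((P₂ * α).trace).re ≤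
      ∑ i ∈ Finset.univ.filter (fun i : Fin N => (i : ℕ) < p), svals hα i := by
  set V := (hα.eigenvectorUnitary : Matrix (Fin N) (Fin N) ℂ) with hVdef
  have hVm : V * star V = 1 := Matrix.mem_unitaryGroup_iff.mp hα.eigenvectorUnitary.2
  have hVm' : star V * V = 1 := Matrix.mem_unitaryGroup_iff'.mp hα.eigenvectorUnitary.2
  set lam := hα.eigenvalues with hlam
  -- the conjugated projections
  have Qherm : ∀ P : Matrix (Fin N) (Fin N) ℂ, P.IsHermitian →
      (star V * P * V).IsHermitian := fun P hP => by
    show (star V * P * V)ᴴ = star V * P * V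
    simp only [Matrix.conjTranspose_mul, Matrix.star_eq_conjTranspose,
      Matrix.conjTranspose_conjTranspose, hP.eq, Matrix.mul_assoc]
  have Qproj : ∀ P : Matrix (Fin N) (Fin N) ℂ, P * P = P →
      (star V * P * V) * (star V * P * V) = star V * P * V := fun P hPp => by
    calc (star V * P * V) * (star V * P * V)
        = star V * P * (V * star V) * P * V := by simp only [Matrix.mul_assoc]
      _ = star V * (P * P) * V := by rw [hVm]; simp only [Matrix.mul_one, Matrix.mul_assoc]
      _ = star V * P * V := by rw [hPp, Matrix.mul_assoc]
  set Q₁ := star V * P₁ * V with hQ₁def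
  set Q₂ := star V * P₂ * V with hQ₂def
  have hd₁ := fun i => diag_proj (Qherm P₁ hP₁herm) (Qproj P₁ hP₁proj) i
  have hd₂ := fun i => diag_proj (Qherm P₂ hP₂herm) (Qproj P₂ hP₂proj) i
  -- trace of Q equals rank of P
  have Qtr : ∀ (P : Matrix (Fin N) (Fin N) ℂ), P.IsHermitian → P * P = P →
      ∑ i, ((star V * P * V) i i).re = (P.rank : ℝ) := by
    intro P hP hPp
    have h1 : (star V * P * V).trace = P.trace := by
      rw [Matrix.trace_mul_cycle, hVm, Matrix.one_mul]
    have h2 : ∑ i, ((star V * P * V) i i).re = ((star V * P * V).trace).re := by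
      rw [Matrix.trace, Complex.re_sum]; rfl
    rw [h2, h1, proj_trace hP hPp]
    simp
  have hS₁ : ∑ i, (Q₁ i i).re = (p₁ : ℝ) := by rw [hQ₁def, Qtr P₁ hP₁herm hP₁proj, hp₁]
  have hS₂ : ∑ i, (Q₂ i i).re = (p₂ : ℝ) := by rw [hQ₂def, Qtr P₂ hP₂herm hP₂proj, hp₂]
  -- rewrite the LHS
  have hL : ((P₁ * α).trace).re - ((P₂ * α).trace).re
      = ∑ i, lam i * ((Q₁ i i).re - (Q₂ i i).re) := by
    rw [trace_mul_herm_re α P₁ hα, trace_mul_herm_re α P₂ hα, ← Finset.sum_sub_distrib]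
    exact Finset.sum_congr rfl fun i _ => by ring
  rw [hL]
  set t : Fin N → ℝ := fun i => |(Q₁ i i).re - (Q₂ i i).re| with htdef
  have step1 : ∑ i, lam i * ((Q₁ i i).re - (Q₂ i i).re) ≤ ∑ i, |lam i| * t i := by
    refine Finset.sum_le_sum fun i _ => ?_
    calc lam i * ((Q₁ i i).re - (Q₂ i i).re) ≤ |lam i * ((Q₁ i i).re - (Q₂ i i).re)| :=
        le_abs_self _
      _ = |lam i| * t i := abs_mul _ _
  refine step1.trans ?_
  set σ := Tuple.sort (fun j => -|lam j|) with hσ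
  have hperm : ∑ i, |lam i| * t i = ∑ i, |lam (σ i)| * t (σ i) :=
    (Equiv.sum_comp σ fun i => |lam i| * t i).symm
  rw [hperm]
  have hmono := Tuple.monotone_sort (fun j => -|lam j|)
  have hflip : ∑ i, |lam (σ i)| * t (σ i) = ∑ i, t (σ i) * |lam (σ i)| := by
    exact Finset.sum_congr rfl fun i _ => mul_comm _ _
  rw [hflip]
  refine weighted_le_top hpN (fun i => |lam (σ i)|) (fun i => t (σ i)) ?_ ?_ ?_ ?_ ?_
  · exact fun i => abs_nonneg _
  · intro i j hij
    have := hmono hij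
    simp only [Function.comp_apply] at this
    linarith
  · exact fun i => abs_nonneg _
  · intro i
    have h1 := hd₁ (σ i); have h2 := hd₂ (σ i)
    exact abs_le.mpr ⟨by linarith [h1.1, h2.2], by linarith [h1.2, h2.1]⟩
  · have he : ∑ i, t (σ i) = ∑ i, t i := Equiv.sum_comp σ t
    rw [he]
    have hb : ∑ i, t i ≤ ∑ i, ((Q₁ i i).re + (Q₂ i i).re) := by
      refine Finset.sum_le_sum fun i _ => ?_
      have h1 := hd₁ i; have h2 := hd₂ i
      exact abs_le.mpr ⟨by linarith [h1.1, h2.1], by linarith [h1.1, h2.1]⟩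
    rw [Finset.sum_add_distrib, hS₁, hS₂] at hb
    rw [hp]
    push_cast
    exact hb
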